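/- Suppose F, X: ℝ → ℝ are continuous and there exist A ∈ C, R ∈ ΩC^z with z > 1 such that F_s (X_t - X_s) = (A_t - A_s) - R_{st} for all s,t. If F', A', R' is another such decomposition with R' ∈ ΩC^z, then R = R' and A - A' is constant. -/

import Mathlib

/-- A function with increments bounded by `C * |t-s|^z`, `z > 1`, is constant. -/
lemma const_of_holder_gt_one (D : ℝ → ℝ) (C z : ℝ) (hz : 1 < z)
    (h : ∀ s t : ℝ, |D t - D s| ≤ C * |t - s| ^ z) :
    ∀ s t : ℝ, D t = D s := by
  have hC : 0 ≤ C := by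
    have h01 := h 0 1
    have : (0:ℝ) ≤ C * |(1:ℝ) - 0| ^ z := le_trans (abs_nonneg _) h01
    simpa using this
  have hderiv : ∀ x : ℝ, HasDerivAt D 0 x := by
    intro x
    rw [hasDerivAt_iff_tendsto]
    have hbound : ∀ t : ℝ, |t - x|⁻¹ * ‖D t - D x - (t - x) * 0‖ ≤ C * |t - x| ^ (z - 1) := by
      intro t
      rcases eq_or_ne t x with rfl | hne
      · simp [Real.zero_rpow (by linarith : z - 1 ≠ 0)]
      · have hpos : 0 < |t - x| := abs_pos.mpr (sub_ne_zero.mpr hne)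
        have key : |D t - D x| ≤ C * |t - x| ^ (z - 1) * |t - x| := by
          have := h x t
          calc |D t - D x| ≤ C * |t - x| ^ z := this
            _ = C * |t - x| ^ (z - 1) * |t - x| := by
                rw [mul_assoc]
                congr 1
                nth_rewrite 3 [← Real.rpow_one |t - x|]
                rw [← Real.rpow_add hpos, sub_add_cancel]
        simp only [mul_zero, sub_zero, Real.norm_eq_abs]
        rw [inv_mul_le_iff₀ hpos]
        calc |D t - D x| ≤ C * |t - x| ^ (z - 1) * |t - x| := key
          _ = |t - x| * (C * |t - x| ^ (z - 1)) := by ring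
    have htend : Filter.Tendsto (fun t : ℝ => C * |t - x| ^ (z - 1)) (nhds x) (nhds 0) := by
      have h1 : Filter.Tendsto (fun t : ℝ => |t - x|) (nhds x) (nhds 0) := by
        have : Filter.Tendsto (fun t : ℝ => t - x) (nhds x) (nhds 0) := by
          have := (continuous_id.sub continuous_const : Continuous fun t : ℝ => t - x).tendsto x
          simpa using (show Filter.Tendsto (fun t : ℝ => t - x) (nhds x) (nhds (x - x)) from this)
        simpa using this.abs
      have h2 : Filter.Tendsto (fun y : ℝ => C * y ^ (z - 1)) (nhds 0) (nhds 0) := by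
        have : Filter.Tendsto (fun y : ℝ => y ^ (z - 1)) (nhds 0) (nhds ((0:ℝ) ^ (z - 1))) := by
          apply ContinuousAt.tendsto
          exact Real.continuousAt_rpow_const 0 (z - 1) (Or.inr (by linarith))
        rw [Real.zero_rpow (by linarith : z - 1 ≠ 0)] at this
        simpa using (this.const_mul C)
      exact h2.comp h1
    exact squeeze_zero (fun t => by positivity) hbound htend
  intro s t
  exact is_const_of_deriv_eq_zero (fun x => (hderiv x).differentiableAt)
    (fun x => (hderiv x).deriv) t s

/-- Uniqueness of the decomposition `F δX = δA - R` with remainder in `ΩC^z`, `z > 1`: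
two such decompositions have the same remainder `R` and `A - A'` is constant. -/
theorem young_decomposition_unique (F X A A' : ℝ → ℝ)
    (hF : Continuous F) (hX : Continuous X) (hA : Continuous A) (hA' : Continuous A')
    (R R' : ℝ → ℝ → ℝ) (z K K' : ℝ) (hz : 1 < z)
    (hR : ∀ s t : ℝ, |R s t| ≤ K * |t - s| ^ z)
    (hR' : ∀ s t : ℝ, |R' s t| ≤ K' * |t - s| ^ z)
    (hdec : ∀ s t : ℝ, F s * (X t - X s) = (A t - A s) - R s t)
    (hdec' : ∀ s t : ℝ, F s * (X t - X s) = (A' t - A' s) - R' s t) :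
    (∀ s t : ℝ, R s t = R' s t) ∧ (∀ s t : ℝ, A t - A' t = A s - A' s) := by
  set D : ℝ → ℝ := fun t => A t - A' t with hD
  have hdiff : ∀ s t : ℝ, D t - D s = R s t - R' s t := by
    intro s t
    have h1 := hdec s t
    have h2 := hdec' s t
    simp only [hD]
    linarith
  have hconst : ∀ s t : ℝ, D t = D s := by
    apply const_of_holder_gt_one D (K + K') z hz
    intro s t
    rw [hdiff s t]
    calc |R s t - R' s t| ≤ |R s t| + |R' s t| := abs_sub _ _
      _ ≤ K * |t - s| ^ z + K' * |t - s| ^ z := add_le_add (hR s t) (hR' s t)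
      _ = (K + K') * |t - s| ^ z := by ring
  refine ⟨fun s t => ?_, fun s t => hconst s t⟩
  have := hdiff s t
  rw [hconst s t] at this
  linarith
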